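/- Let f be a (2,3,…,k+1)-block function on [n_k] with n_k = k(k+3)/2 and cardinality representation F, and let g be any submodular function on 2^[n_k]. Then there exists S ⊆ [n_k] with |f(S) − g(S)| ≥ ( F(0,…,0) + Σ_{i=1}^k F(1,…,1,i+1,0,…,0) ) / (2(k+1)) − F(1,…,1)/2, where F(1,…,1,i+1,0,…,0) has i−1 leading 1's and k−i trailing 0's. -/

import Mathlib

/-- Submodular functions are subadditive over marginals: adding a set `T`
disjoint from `A` gains at most the sum of singleton marginals. -/
lemma submod_marginals {α : Type*} [DecidableEq α] (g : Finset α → ℝ)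
    (hg : ∀ A B, g A + g B ≥ g (A ∪ B) + g (A ∩ B)) :
    ∀ (T A : Finset α), Disjoint A T →
      g (A ∪ T) ≤ g A + ∑ y ∈ T, (g (insert y A) - g A) := by
  intro T
  induction T using Finset.induction_on with
  | empty => intro A _; simp
  | @insert z T hz ih =>
    intro A hd
    have hdT : Disjoint A T := hd.mono_right (Finset.subset_insert _ _)
    have hzA : z ∉ A := fun h =>
      (Finset.disjoint_left.mp hd h) (Finset.mem_insert_self _ _)
    have key := hg (A ∪ T) (insert z A)
    have hinter : (A ∪ T) ∩ insert z A = A := by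
      ext a
      by_cases haz : a = z
      · subst haz; simp [hz, hzA]
      · simp only [Finset.mem_inter, Finset.mem_union, Finset.mem_insert, haz, false_or]
        tauto
    have hunion : (A ∪ T) ∪ insert z A = A ∪ insert z T := by
      ext a; simp only [Finset.mem_union, Finset.mem_insert]; tauto
    rw [hunion, hinter] at key
    have ihA := ih A hdT
    rw [Finset.sum_insert hz]
    linarith

/-- Pick an element of `s` maximizing `g (insert · A)`. -/
noncomputable def pickMax {α : Type*} [DecidableEq α] [Nonempty α]
    (g : Finset α → ℝ) (A s : Finset α) : α :=
  if h : s.Nonempty then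
    (Finset.exists_max_image s (fun y => g (insert y A)) h).choose
  else Classical.arbitrary α

lemma pickMax_spec {α : Type*} [DecidableEq α] [Nonempty α]
    (g : Finset α → ℝ) (A s : Finset α) (h : s.Nonempty) :
    pickMax g A s ∈ s ∧ ∀ y ∈ s, g (insert y A) ≤ g (insert (pickMax g A s) A) := by
  rw [pickMax, dif_pos h]
  exact (Finset.exists_max_image s (fun y => g (insert y A)) h).choose_spec

/-- The greedy chain. -/
noncomputable def chainL {α : Type*} [DecidableEq α] [Nonempty α]
    (g : Finset α → ℝ) (S : ℕ → Finset α) : ℕ → Finset α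
  | 0 => ∅
  | i + 1 => insert (pickMax g (chainL g S i) (S i)) (chainL g S i)

theorem stmt_6 (k : ℕ) (hk : 0 < k)
    (S : Fin k → Finset (Fin (k * (k + 3) / 2)))
    (hcard : ∀ i, (S i).card = i.val + 2)
    (hdisj : ∀ i j, i ≠ j → Disjoint (S i) (S j))
    (hcover : Finset.univ.biUnion S = Finset.univ)
    (F : (Fin k → ℕ) → ℝ)
    (f : Finset (Fin (k * (k + 3) / 2)) → ℝ)
    (hf : ∀ A, f A = F (fun i => (A ∩ S i).card))
    (g : Finset (Fin (k * (k + 3) / 2)) → ℝ)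
    (hg : ∀ A B, g A + g B ≥ g (A ∪ B) + g (A ∩ B)) :
    ∃ A, |f A - g A| ≥
      (F (fun _ => 0)
        + ∑ i, F (fun j => if j < i then 1 else if j = i then i.val + 2 else 0))
        / (2 * ((k : ℝ) + 1))
      - F (fun _ => 1) / 2 := by
  have hn : 0 < k * (k + 3) / 2 := Nat.div_pos (by nlinarith) (by norm_num)
  haveI : Nonempty (Fin (k * (k + 3) / 2)) := ⟨⟨0, hn⟩⟩
  haveI : Nonempty (Fin k) := ⟨⟨0, hk⟩⟩
  set S' : ℕ → Finset (Fin (k * (k + 3) / 2)) :=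
    fun i => if h : i < k then S ⟨i, h⟩ else ∅ with hS'
  set L : ℕ → Finset (Fin (k * (k + 3) / 2)) := chainL g S' with hL
  have hLsucc : ∀ i, L (i + 1) = insert (pickMax g (L i) (S' i)) (L i) := fun i => rfl
  have hL0 : L 0 = ∅ := rfl
  have hS'eq : ∀ (i : ℕ) (h : i < k), S' i = S ⟨i, h⟩ := by
    intro i h; simp [hS', h]
  have hS'ne : ∀ (i : ℕ), i < k → (S' i).Nonempty := by
    intro i h
    rw [hS'eq i h]
    apply Finset.card_pos.mp
    rw [hcard]; omega
  -- invariant: intersections of the chain with blocks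
  have hinv : ∀ i, i ≤ k → ∀ j : Fin k,
      L i ∩ S j = if (j : ℕ) < i then {pickMax g (L (j : ℕ)) (S' (j : ℕ))} else ∅ := by
    intro i
    induction i with
    | zero => intro _ j; simp [hL0]
    | succ i ih =>
      intro hik j
      have hik' : i < k := hik
      have hihk : i ≤ k := le_of_lt hik'
      set x := pickMax g (L i) (S' i) with hx
      have hxS : x ∈ S ⟨i, hik'⟩ := by
        rw [← hS'eq i hik']
        exact (pickMax_spec g (L i) (S' i) (hS'ne i hik')).1
      rw [hLsucc i, ← hx]
      by_cases hji : j = ⟨i, hik'⟩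
      · subst hji
        rw [Finset.insert_inter_of_mem hxS, ih hihk]
        simp [hx]
      · have hxj : x ∉ S j := by
          have := hdisj ⟨i, hik'⟩ j (fun h => hji h.symm)
          exact Finset.disjoint_left.mp this hxS
        rw [Finset.insert_inter_of_notMem hxj, ih hihk]
        have hne : (j : ℕ) ≠ i := by
          intro h; exact hji (Fin.ext h)
        by_cases hlt : (j : ℕ) < i
        · rw [if_pos hlt, if_pos (by omega)]
        · rw [if_neg hlt, if_neg (by omega)]
  -- f values on the relevant sets
  have hf0 : f ∅ = F (fun _ => 0) := by
    have h1 : (fun i => ((∅ : Finset (Fin (k * (k + 3) / 2))) ∩ S i).card)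
        = fun _ : Fin k => 0 := by funext j; simp
    rw [hf, h1]
  have hfL : f (L k) = F (fun _ => 1) := by
    have h1 : (fun i => (L k ∩ S i).card) = fun _ : Fin k => 1 := by
      funext j
      rw [hinv k le_rfl j, if_pos j.isLt]
      simp
    rw [hf, h1]
  have hfP : ∀ i : Fin k, f (L (i : ℕ) ∪ S' (i : ℕ)) =
      F (fun j => if j < i then 1 else if j = i then i.val + 2 else 0) := by
    intro i
    have hSi : S' (i : ℕ) = S i := by
      rw [hS'eq (i : ℕ) i.isLt]
    have h1 : (fun j => ((L (i : ℕ) ∪ S' (i : ℕ)) ∩ S j).card)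
        = fun j : Fin k => if j < i then 1 else if j = i then i.val + 2 else 0 := by
      funext j
      rw [Finset.union_inter_distrib_right, hSi,
        hinv (i : ℕ) (le_of_lt i.isLt) j]
      by_cases hji : j = i
      · subst hji
        simp [hcard]
      · have hSij : S i ∩ S j = ∅ :=
          Finset.disjoint_iff_inter_eq_empty.mp (hdisj i j (fun h => hji h.symm))
        have hvne : (j : ℕ) ≠ (i : ℕ) := fun h => hji (Fin.ext h)
        by_cases hlt : j < i
        · have hvlt : (j : ℕ) < (i : ℕ) := Fin.lt_def.mp hlt
          simp [hSij, hji, hlt, hvlt]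
        · have hvlt : ¬ (j : ℕ) < (i : ℕ) := fun h => hlt (Fin.lt_def.mpr h)
          simp [hSij, hji, hlt, hvlt]
    rw [hf, h1]
  -- per-step submodular bound
  have hstep : ∀ i, i < k →
      g (L i ∪ S' i) ≤ ((i : ℝ) + 2) * g (L (i + 1)) - ((i : ℝ) + 1) * g (L i) := by
    intro i hik
    have hdisj' : Disjoint (L i) (S' i) := by
      rw [Finset.disjoint_iff_inter_eq_empty, hS'eq i hik]
      have := hinv i (le_of_lt hik) ⟨i, hik⟩
      rw [if_neg (by simp)] at this
      exact this
    have h1 := submod_marginals g hg (S' i) (L i) hdisj'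
    have hmax := pickMax_spec g (L i) (S' i) (hS'ne i hik)
    have hcardS : (S' i).card = i + 2 := by rw [hS'eq i hik, hcard]
    have h2 : ∑ y ∈ S' i, (g (insert y (L i)) - g (L i)) ≤
        (S' i).card • (g (L (i + 1)) - g (L i)) := by
      apply Finset.sum_le_card_nsmul
      intro y hy
      have h3 := hmax.2 y hy
      rw [hLsucc i]
      linarith
    rw [hcardS, nsmul_eq_mul] at h2
    push_cast at h2
    linarith
  -- telescoping
  have htel : ∀ i, i ≤ k →
      ∑ m ∈ Finset.range i, g (L m ∪ S' m) ≤ ((i : ℝ) + 1) * g (L i) - g (L 0) := by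
    intro i
    induction i with
    | zero => intro _; simp
    | succ i ih =>
      intro h
      have h1 := hstep i (by omega)
      have h2 := ih (by omega)
      rw [Finset.sum_range_succ]
      push_cast
      linarith
  -- conclude by contradiction
  by_contra hcon
  push_neg at hcon
  set E : ℝ := (F (fun _ => 0)
        + ∑ i, F (fun j => if j < i then 1 else if j = i then i.val + 2 else 0))
        / (2 * ((k : ℝ) + 1))
      - F (fun _ => 1) / 2 with hE
  set N : ℝ := F (fun _ => 0)
        + ∑ i, F (fun j => if j < i then 1 else if j = i then i.val + 2 else 0) with hN
  clear_value E N
  have hEeq : 2 * ((k : ℝ) + 1) * E = N - ((k : ℝ) + 1) * F (fun _ => 1) := by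
    have hkpos : (2 : ℝ) * ((k : ℝ) + 1) ≠ 0 := by positivity
    rw [hE]
    field_simp
  have hE0 := abs_lt.mp (hcon ∅)
  rw [hf0] at hE0
  have hLk := abs_lt.mp (hcon (L k))
  rw [hfL] at hLk
  have hsum : ∑ i : Fin k,
      (F (fun j => if j < i then 1 else if j = i then i.val + 2 else 0) - E)
      < ∑ i : Fin k, g (L (i : ℕ) ∪ S' (i : ℕ)) := by
    apply Finset.sum_lt_sum_of_nonempty (Finset.univ_nonempty)
    intro i _
    have := abs_lt.mp (hcon (L (i : ℕ) ∪ S' (i : ℕ)))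
    rw [hfP i] at this
    linarith [this.1]
  have hsum2 : ∑ i : Fin k, g (L (i : ℕ) ∪ S' (i : ℕ))
      = ∑ m ∈ Finset.range k, g (L m ∪ S' m) :=
    Fin.sum_univ_eq_sum_range (fun m => g (L m ∪ S' m)) k
  have htelk := htel k le_rfl
  rw [hL0] at htelk
  have hsplit : ∑ i : Fin k,
      (F (fun j => if j < i then 1 else if j = i then i.val + 2 else 0) - E)
      = (∑ i : Fin k, F (fun j => if j < i then 1 else if j = i then i.val + 2 else 0))
        - (k : ℝ) * E := by
    rw [Finset.sum_sub_distrib, Finset.sum_const, Finset.card_univ, Fintype.card_fin,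
      nsmul_eq_mul]
  rw [hsplit, hsum2] at hsum
  -- N - kE - F0 + E... combine
  have hkpos' : (0 : ℝ) < (k : ℝ) + 1 := by positivity
  have hgLk : g (L k) < F (fun _ => 1) + E := by linarith [hLk.1]
  have hmul : ((k : ℝ) + 1) * g (L k) < ((k : ℝ) + 1) * (F (fun _ => 1) + E) :=
    mul_lt_mul_of_pos_left hgLk hkpos'
  linarith [hsum, htelk, hE0.2, hmul, hEeq, hN]
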